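/- Let n ≥ 2 and 1 ≤ r < n be integers, let h be a homeomorphism of 𝔠_{n,r}, and let τ, η be words such that for every χ ∈ List (Fin n) (including the empty list) h does NOT act in the same fashion on U_{τ⌢χ} and U_{η⌢χ}. Then h does not preserve tail equivalence: there exist x, y ∈ 𝔠_{n,r} with x ∼ y but ¬(h(x) ∼ h(y)). -/

import Mathlib

open Set

namespace HigmanAut

/-- The one-sided infinite sequence space `𝔠_n` on `n` letters. -/
abbrev Cn (n : ℕ) : Type := ℕ → Fin n

/-- The Cantor space `𝔠_{n,r} = Fin r × (ℕ → Fin n)` (with the product topology,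
`Fin r` and `Fin n` discrete). -/
abbrev CNR (n r : ℕ) : Type := Fin r × Cn n

/-- A word: a letter from `Fin r` together with a finite list over `Fin n`. -/
abbrev Word (n r : ℕ) : Type := Fin r × List (Fin n)

/-- Self-homeomorphisms of `𝔠_{n,r}`. -/
abbrev Homeo (n r : ℕ) : Type := CNR n r ≃ₜ CNR n r

/-- Append a finite list to a word: `ν⌢w`. -/
def wApp {n r : ℕ} (ν : Word n r) (w : List (Fin n)) : Word n r := (ν.1, ν.2 ++ w)

/-- The point `ν⌢x` of `𝔠_{n,r}` determined by a word `ν` followed by `x ∈ 𝔠_n`. -/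
def wCat {n r : ℕ} (ν : Word n r) (x : Cn n) : CNR n r :=
  (ν.1, fun i => if h : i < ν.2.length then ν.2.get ⟨i, h⟩ else x (i - ν.2.length))

/-- The cone `U_ν` of a word `ν`. -/
def cone {n r : ℕ} (ν : Word n r) : Set (CNR n r) :=
  {p | p.1 = ν.1 ∧ ∀ (i : ℕ) (h : i < ν.2.length), p.2 i = ν.2.get ⟨i, h⟩}

/-- Membership in the Higman--Thompson group `G_{n,r}`: `g` is a prefix code map,
i.e. there are `k ≥ 1` and words `ν i`, `η i` whose cones partition `𝔠_{n,r}`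
with `g(ν i ⌢ x) = η i ⌢ x` for all `i`, `x`. -/
def IsHigman {n r : ℕ} (g : Homeo n r) : Prop :=
  ∃ k : ℕ, 0 < k ∧ ∃ ν η : Fin k → Word n r,
    (∀ p : CNR n r, ∃! i : Fin k, p ∈ cone (ν i)) ∧
    (∀ p : CNR n r, ∃! i : Fin k, p ∈ cone (η i)) ∧
    (∀ (i : Fin k) (x : Cn n), g (wCat (ν i) x) = wCat (η i) x)

/-- The Higman--Thompson group `G_{n,r}` as a set of homeomorphisms. -/
def higmanSet (n r : ℕ) : Set (Homeo n r) := {g | IsHigman g}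

/-- Conjugation: in the paper's right-action notation this is `g ↦ h⁻¹ g h`
(as a left function, `x ↦ h (g (h⁻¹ x))`). -/
def conjH {n r : ℕ} (h g : Homeo n r) : Homeo n r := (h.symm.trans g).trans h

/-- `h` acts in the same fashion on `U_α` and `U_β`: there are words `α'`, `β'`
and a common local action `f` with `h(α⌢x) = α'⌢f(x)` and `h(β⌢x) = β'⌢f(x)`. -/
def SameFashion {n r : ℕ} (h : Homeo n r) (α β : Word n r) : Prop :=
  ∃ (α' β' : Word n r) (f : Cn n → Cn n),
    (∀ x : Cn n, h (wCat α x) = wCat α' (f x)) ∧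
    (∀ x : Cn n, h (wCat β x) = wCat β' (f x))

/-- Tail equivalence on `𝔠_{n,r}`. -/
def TailEq {n r : ℕ} (x y : CNR n r) : Prop :=
  ∃ (ν η : Word n r) (z : Cn n), x = wCat ν z ∧ y = wCat η z

/-- `h` is pointwise canonical. -/
def PtwiseCanonical {n r : ℕ} (h : Homeo n r) : Prop :=
  ∀ x : CNR n r, ∃ (η₁ η₂ : Word n r) (y : Cn n), x = wCat η₁ y ∧ h x = wCat η₂ y

/-- `h` is densely canonical. -/
def DenselyCanonical {n r : ℕ} (h : Homeo n r) : Prop :=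
  ∀ U : Set (CNR n r), IsOpen U → U.Nonempty →
    ∃ η ζ : Word n r, cone η ⊆ U ∧ ∀ x : Cn n, h (wCat η x) = wCat ζ x

/-- `h` belongs to `H_{n,r,∼}`: `x ∼ y` iff `h(x) ∼ h(y)`. -/
def PreservesTailEq {n r : ℕ} (h : Homeo n r) : Prop :=
  ∀ x y : CNR n r, TailEq x y ↔ TailEq (h x) (h y)

/-- `ν` is a prefix of `η`, i.e. `U_η ⊆ U_ν`. -/
def WPrefix {n r : ℕ} (ν η : Word n r) : Prop := cone η ⊆ cone ν

/-- Two words are incomparable if neither is a prefix of the other. -/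
def Incomp {n r : ℕ} (ν η : Word n r) : Prop := ¬ WPrefix ν η ∧ ¬ WPrefix η ν

def listCat {n : ℕ} (χ : List (Fin n)) (x : Cn n) : Cn n :=
  fun i => if h : i < χ.length then χ.get ⟨i, h⟩ else x (i - χ.length)

lemma continuous_wCat {n r : ℕ} (ν : Word n r) : Continuous (wCat ν) := by
  apply Continuous.prodMk continuous_const
  apply continuous_pi
  intro i
  by_cases hi : i < ν.2.length
  · simp only [wCat, hi, dif_pos]; exact continuous_const
  · simp only [wCat, hi, dif_neg]; exact continuous_apply _

lemma wCat_snd_add {n r : ℕ} (ν : Word n r) (w : Cn n) (i : ℕ) :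
    (wCat ν w).2 (ν.2.length + i) = w i := by
  simp only [wCat]
  rw [dif_neg (by omega)]
  congr 1; omega

lemma wCat_mem_cone {n r : ℕ} (ν : Word n r) (w : Cn n) : wCat ν w ∈ cone ν := by
  refine ⟨rfl, fun i hi => ?_⟩
  simp only [wCat, dif_pos hi]

lemma eq_wCat_of_mem_cone {n r : ℕ} {ν : Word n r} {p : CNR n r} (hp : p ∈ cone ν) :
    p = wCat ν (fun i => p.2 (ν.2.length + i)) := by
  obtain ⟨h1, h2⟩ := hp
  refine Prod.ext h1 (funext fun i => ?_)
  simp only [wCat]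
  by_cases hi : i < ν.2.length
  · rw [dif_pos hi]; exact h2 i hi
  · rw [dif_neg hi, show ν.2.length + (i - ν.2.length) = i by omega]

lemma isClosed_cone {n r : ℕ} (ν : Word n r) : IsClosed (cone ν) := by
  have : cone ν = {p : CNR n r | p.1 = ν.1} ∩
      ⋂ (i : Fin ν.2.length), {p : CNR n r | p.2 i.1 = ν.2.get i} := by
    ext p
    simp only [cone, mem_setOf_eq, mem_inter_iff, mem_iInter]
    constructor
    · rintro ⟨h1, h2⟩; exact ⟨h1, fun i => h2 i.1 i.2⟩
    · rintro ⟨h1, h2⟩; exact ⟨h1, fun i hi => h2 ⟨i, hi⟩⟩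
  rw [this]
  refine IsClosed.inter (isClosed_eq continuous_fst continuous_const) ?_
  exact isClosed_iInter fun i => isClosed_eq
    ((continuous_apply _).comp continuous_snd) continuous_const

lemma wCat_wApp {n r : ℕ} (ν : Word n r) (χ : List (Fin n)) (x : Cn n) :
    wCat (wApp ν χ) x = wCat ν (listCat χ x) := by
  refine Prod.ext rfl (funext fun i => ?_)
  simp only [wCat, wApp, listCat, List.length_append]
  by_cases h1 : i < ν.2.length
  · rw [dif_pos (show i < ν.2.length + χ.length by omega), dif_pos h1]
    simp [List.get_eq_getElem, List.getElem_append, h1]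
  · by_cases h2 : i < ν.2.length + χ.length
    · rw [dif_pos h2, dif_neg h1, dif_pos (show i - ν.2.length < χ.length by omega)]
      simp [List.get_eq_getElem, List.getElem_append, h1]
    · rw [dif_neg (show ¬ i < ν.2.length + χ.length by omega), dif_neg h1,
        dif_neg (show ¬ i - ν.2.length < χ.length by omega),
        show i - ν.2.length - χ.length = i - (ν.2.length + χ.length) by omega]

/-- If `h` never acts in the same fashion on `U_{τ⌢χ}` and
`U_{η⌢χ}` (for any `χ`, including the empty list), then `h` does not preserve
tail equivalence. -/
theorem not_same_fashion_everywhere_not_preserve_tailEq (n r : ℕ) (hn : 2 ≤ n)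
    (hr1 : 1 ≤ r) (hrn : r < n) (h : Homeo n r) (τ η : Word n r)
    (hne : ∀ χ : List (Fin n), ¬ SameFashion h (wApp τ χ) (wApp η χ)) :
    ∃ x y : CNR n r, TailEq x y ∧ ¬ TailEq (h x) (h y) := by
  by_contra hc
  push_neg at hc
  have hTE : ∀ z : Cn n, TailEq (h (wCat τ z)) (h (wCat η z)) := fun z =>
    hc (wCat τ z) (wCat η z) ⟨τ, η, z, rfl, rfl⟩
  haveI : NeZero n := ⟨by omega⟩
  set F : Word n r × Word n r → Set (Cn n) := fun q =>
    {z | h (wCat τ z) ∈ cone q.1 ∧ h (wCat η z) ∈ cone q.2 ∧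
      ∀ i, (h (wCat τ z)).2 (q.1.2.length + i) = (h (wCat η z)).2 (q.2.2.length + i)}
    with hF
  have c1 : Continuous fun z : Cn n => h (wCat τ z) := h.continuous.comp (continuous_wCat τ)
  have c2 : Continuous fun z : Cn n => h (wCat η z) := h.continuous.comp (continuous_wCat η)
  have hclosed : ∀ q, IsClosed (F q) := by
    intro q
    have : F q = (fun z => h (wCat τ z)) ⁻¹' cone q.1 ∩
        ((fun z => h (wCat η z)) ⁻¹' cone q.2 ∩
          ⋂ i : ℕ, {z | (h (wCat τ z)).2 (q.1.2.length + i)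
            = (h (wCat η z)).2 (q.2.2.length + i)}) := by
      ext z; simp [hF, mem_iInter, and_assoc]
    rw [this]
    refine ((isClosed_cone q.1).preimage c1).inter
      (((isClosed_cone q.2).preimage c2).inter (isClosed_iInter fun i => isClosed_eq ?_ ?_))
    · exact (continuous_apply _).comp (continuous_snd.comp c1)
    · exact (continuous_apply _).comp (continuous_snd.comp c2)
  have hcover : ⋃ q, F q = univ := by
    refine eq_univ_of_forall fun z => ?_
    obtain ⟨α, β, w, e1, e2⟩ := hTE z
    refine mem_iUnion.2 ⟨(α, β), ?_⟩
    rw [hF]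
    refine ⟨by rw [e1]; exact wCat_mem_cone α w, by rw [e2]; exact wCat_mem_cone β w,
      fun i => by rw [e1, e2, wCat_snd_add, wCat_snd_add]⟩
  obtain ⟨q, z₀, hz₀⟩ := nonempty_interior_of_iUnion_of_closed hclosed hcover
  have hnhds : F q ∈ nhds z₀ := mem_interior_iff_mem_nhds.1 hz₀
  rw [nhds_pi] at hnhds
  obtain ⟨I, hIfin, t, ht, hsub⟩ := Filter.mem_pi.1 hnhds
  obtain ⟨m, hm⟩ := hIfin.bddAbove
  set χ : List (Fin n) := List.ofFn (fun j : Fin (m + 1) => z₀ j) with hχ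
  have hmem : ∀ x : Cn n, listCat χ x ∈ F q := by
    intro x
    apply hsub
    intro i hi
    have hi' : i < χ.length := by
      have := hm hi
      simp [hχ]; omega
    have : listCat χ x i = z₀ i := by
      simp only [listCat, dif_pos hi', List.get_eq_getElem, hχ, List.getElem_ofFn]
      exact dif_pos hi'
    rw [this]
    exact mem_of_mem_nhds (ht i)
  refine hne χ ⟨q.1, q.2, fun x i => (h (wCat τ (listCat χ x))).2 (q.1.2.length + i),
    fun x => ?_, fun x => ?_⟩
  · rw [wCat_wApp]
    exact eq_wCat_of_mem_cone (hmem x).1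
  · rw [wCat_wApp, eq_wCat_of_mem_cone (hmem x).2.1]
    congr 1
    funext i
    exact ((hmem x).2.2 i).symm

end HigmanAut
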